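/- For every h ≥ 1, the complete binary tree T_h of height h has pathwidth exactly ⌈h/2⌉. -/

import Mathlib

/-- A tree decomposition of a simple graph `G` on vertex type `V`, with bags indexed by the
nodes of a finite tree `T` on `Fin n`: every vertex is in some bag, every edge has both
endpoints in some bag, and for each vertex the set of nodes whose bag contains it induces a
connected (hence subtree) subgraph of `T`. -/
def IsTreeDecomp {V : Type} (G : SimpleGraph V) {n : ℕ}
    (T : SimpleGraph (Fin n)) (bag : Fin n → Finset V) : Prop :=
  T.IsTree ∧
  (∀ v : V, ∃ i, v ∈ bag i) ∧
  (∀ u v : V, G.Adj u v → ∃ i, u ∈ bag i ∧ v ∈ bag i) ∧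
  (∀ v : V, (T.induce {i | v ∈ bag i}).Connected)

/-- The treewidth of `G`: the least `w` such that `G` admits a tree decomposition all of whose
bags have at most `w + 1` vertices (i.e. of width at most `w`). -/
noncomputable def treewidth {V : Type} (G : SimpleGraph V) : ℕ :=
  sInf {w : ℕ | ∃ (n : ℕ) (T : SimpleGraph (Fin n)) (bag : Fin n → Finset V),
    IsTreeDecomp G T bag ∧ ∀ i, (bag i).card ≤ w + 1}

/-- The pathwidth of `G`: the least `w` such that `G` admits a tree decomposition along a path
all of whose bags have at most `w + 1` vertices (i.e. a path decomposition of width at most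
`w`). -/
noncomputable def pathwidth {V : Type} (G : SimpleGraph V) : ℕ :=
  sInf {w : ℕ | ∃ (n : ℕ) (bag : Fin n → Finset V),
    IsTreeDecomp G (SimpleGraph.pathGraph n) bag ∧ ∀ i, (bag i).card ≤ w + 1}

/-- The complete binary tree of height `h`, as a simple graph: vertices are the binary strings
of length at most `h` (the root is the empty string, with `2 ^ (h + 1) - 1` vertices in total),
and each vertex `l` of length less than `h` is adjacent to its two children `x :: l`. -/
def completeBinaryTree (h : ℕ) : SimpleGraph {l : List Bool // l.length ≤ h} :=
  SimpleGraph.fromRel (fun a b => ∃ x : Bool, (b : List Bool) = x :: (a : List Bool))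

open List Finset

/-- subtree vertex set: strings with suffix `r`, extra length ≤ h -/
def SubT (h : ℕ) (r : List Bool) : Set (List Bool) :=
  {l | r <:+ l ∧ l.length ≤ h + r.length}

mutual
/-- path decomposition bags of subtree of height h rooted at r -/
def Dd : ℕ → List Bool → List (Finset (List Bool))
  | 0, r => [{r}]
  | 1, r => [{false :: r, r}, {r, true :: r}]
  | (h+2), r =>
      (Ee (h+1) (false :: r)).reverse
        ++ ([{false :: r, r}, {r, true :: r}] ++ Ee (h+1) (true :: r))
  termination_by h r => 2 * h + 1
  decreasing_by all_goals simp_wf <;> omega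
/-- decomposition of subtree of height m rooted at r along leftmost spine -/
def Ee : ℕ → List Bool → List (Finset (List Bool))
  | 0, _ => []
  | (m+1), r =>
      ((Dd m (true :: r)).map (insert r))
        ++ ([{r, false :: r}] ++ Ee m (false :: r))
  termination_by m r => 2 * m
  decreasing_by all_goals simp_wf <;> omega
end

lemma mem_Sub_self (h : ℕ) (r : List Bool) : r ∈ SubT h r :=
  ⟨suffix_rfl, by omega⟩

lemma Sub_cons_subset (h : ℕ) (x : Bool) (r : List Bool) :
    SubT h (x :: r) ⊆ SubT (h+1) r := by
  rintro l ⟨hs, hl⟩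
  exact ⟨(suffix_cons x r).trans hs, by simp at hl ⊢; omega⟩

lemma Sub_mono {h h' : ℕ} (hle : h ≤ h') (r : List Bool) : SubT h r ⊆ SubT h' r := by
  rintro l ⟨hs, hl⟩; exact ⟨hs, by omega⟩

lemma length_lt_of_mem_Sub_cons {h : ℕ} {x : Bool} {r l : List Bool}
    (hl : l ∈ SubT h (x :: r)) : r.length < l.length := by
  have := hl.1.length_le; simp at this; omega

lemma not_mem_Sub_cons (h : ℕ) (x : Bool) (r : List Bool) : r ∉ SubT h (x :: r) := by
  intro hmem; have := length_lt_of_mem_Sub_cons hmem; omega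

lemma Sub_cons_disjoint {h h' : ℕ} {r l : List Bool}
    (h1 : l ∈ SubT h (false :: r)) (h2 : l ∈ SubT h' (true :: r)) : False := by
  have e := List.suffix_of_suffix_length_le h1.1 h2.1 (by simp)
  have := e.eq_of_length (by simp)
  simp at this

lemma SubT_succ_cases {m : ℕ} {r l : List Bool} (hl : l ∈ SubT (m+1) r) :
    l = r ∨ ∃ x, l ∈ SubT m (x :: r) := by
  obtain ⟨⟨t, ht⟩, hlen⟩ := hl
  rcases List.eq_nil_or_concat t with rfl | ⟨t', x, rfl⟩
  · left; simpa using ht.symm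
  · right; exact ⟨x, ⟨⟨t', by simpa using ht⟩, by subst ht; simp at hlen ⊢; omega⟩⟩

mutual
theorem Dd_subset : ∀ (h : ℕ) (r : List Bool), ∀ B ∈ Dd h r, ∀ v ∈ B, v ∈ SubT h r
  | 0, r => by
    intro B hB v hv
    simp only [Dd] at hB
    simp at hB; subst hB; simp at hv; subst hv; exact mem_Sub_self _ _
  | 1, r => by
    intro B hB v hv
    simp only [Dd] at hB
    have h0 : r ∈ SubT 1 r := mem_Sub_self _ _
    have h1 : false :: r ∈ SubT 1 r := ⟨⟨[false], rfl⟩, by simp⟩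
    have h2 : true :: r ∈ SubT 1 r := ⟨⟨[true], rfl⟩, by simp⟩
    simp at hB
    rcases hB with rfl | rfl <;> (simp at hv; rcases hv with rfl | rfl <;> assumption)
  | (h+2), r => by
    intro B hB v hv
    simp only [Dd] at hB
    have hsf : SubT (h+1) (false :: r) ⊆ SubT (h+2) r := Sub_cons_subset _ _ _
    have hst : SubT (h+1) (true :: r) ⊆ SubT (h+2) r := Sub_cons_subset _ _ _
    have h0 : r ∈ SubT (h+2) r := mem_Sub_self _ _
    have h1 : false :: r ∈ SubT (h+2) r := ⟨⟨[false], rfl⟩, by simp⟩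
    have h2 : true :: r ∈ SubT (h+2) r := ⟨⟨[true], rfl⟩, by simp⟩
    rw [List.mem_append] at hB
    rcases hB with hB | hB
    · rw [List.mem_reverse] at hB
      exact hsf (Ee_subset _ _ _ hB _ hv)
    · rw [List.mem_append] at hB
      rcases hB with hB | hB
      · simp at hB
        rcases hB with rfl | rfl <;> (simp at hv; rcases hv with rfl | rfl <;> assumption)
      · exact hst (Ee_subset _ _ _ hB _ hv)
  termination_by h r => 2 * h + 1

theorem Ee_subset : ∀ (m : ℕ) (r : List Bool), ∀ B ∈ Ee m r, ∀ v ∈ B, v ∈ SubT m r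
  | 0, r => by intro B hB; simp [Ee] at hB
  | (m+1), r => by
    intro B hB v hv
    simp only [Ee] at hB
    have h0 : r ∈ SubT (m+1) r := mem_Sub_self _ _
    have h1 : false :: r ∈ SubT (m+1) r := ⟨⟨[false], rfl⟩, by simp⟩
    have hsf : SubT m (false :: r) ⊆ SubT (m+1) r := Sub_cons_subset _ _ _
    have hst : SubT m (true :: r) ⊆ SubT (m+1) r := Sub_cons_subset _ _ _
    rw [List.mem_append] at hB
    rcases hB with hB | hB
    · rw [List.mem_map] at hB
      obtain ⟨B', hB', rfl⟩ := hB
      rcases Finset.mem_insert.mp hv with rfl | hv'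
      · exact h0
      · exact hst (Dd_subset _ _ _ hB' _ hv')
    · rw [List.mem_append] at hB
      rcases hB with hB | hB
      · simp at hB; subst hB
        simp at hv; rcases hv with rfl | rfl <;> assumption
      · exact hsf (Ee_subset _ _ _ hB _ hv)
  termination_by m r => 2 * m
end

lemma SubT_zero {r v : List Bool} (hv : v ∈ SubT 0 r) : v = r := by
  obtain ⟨hs, hl⟩ := hv
  exact (hs.eq_of_length (by have := hs.length_le; omega)).symm

lemma mem_SubT_cons_self {m : ℕ} (x : Bool) (r : List Bool) :
    x :: r ∈ SubT (m+1) r := ⟨⟨[x], rfl⟩, by simp⟩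

lemma Dd_ne_nil (h : ℕ) (r : List Bool) : Dd h r ≠ [] := by
  rcases h with _ | _ | h <;> simp [Dd]

lemma edge_descend {m : ℕ} {r v : List Bool} {x : Bool}
    (h1 : v ∈ SubT (m+1) r) (h2 : x :: v ∈ SubT (m+1) r) :
    v = r ∨ ∃ y, v ∈ SubT m (y :: r) ∧ x :: v ∈ SubT m (y :: r) := by
  rcases SubT_succ_cases h1 with rfl | ⟨y, hy⟩
  · exact Or.inl rfl
  · refine Or.inr ⟨y, hy, hy.1.trans (List.suffix_cons x v), ?_⟩
    have := h2.2; simp at this ⊢; omega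

mutual
theorem Dd_cover : ∀ (h : ℕ) (r : List Bool), ∀ v ∈ SubT h r, ∃ B ∈ Dd h r, v ∈ B
  | 0, r => by
    intro v hv
    exact ⟨{r}, by simp [Dd], by simp [SubT_zero hv]⟩
  | 1, r => by
    intro v hv
    rcases SubT_succ_cases hv with rfl | ⟨x, hx⟩
    · exact ⟨{false :: v, v}, by simp [Dd], by simp⟩
    · rw [SubT_zero hx]
      cases x
      · exact ⟨{false :: r, r}, by simp [Dd], by simp⟩
      · exact ⟨{r, true :: r}, by simp [Dd], by simp⟩
  | (h+2), r => by
    intro v hv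
    rcases SubT_succ_cases hv with rfl | ⟨x, hx⟩
    · exact ⟨{false :: v, v}, by simp [Dd], by simp⟩
    · cases x
      · obtain ⟨B, hB, hvB⟩ := Ee_cover (h+1) (false :: r) (by omega) v hx
        exact ⟨B, by simp only [Dd]; simp [hB], hvB⟩
      · obtain ⟨B, hB, hvB⟩ := Ee_cover (h+1) (true :: r) (by omega) v hx
        exact ⟨B, by simp only [Dd]; simp [hB], hvB⟩
  termination_by h r => 2 * h + 1

theorem Ee_cover : ∀ (m : ℕ) (r : List Bool), 1 ≤ m → ∀ v ∈ SubT m r, ∃ B ∈ Ee m r, v ∈ B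
  | 0, r => by omega
  | (m+1), r => by
    intro _ v hv
    rcases SubT_succ_cases hv with rfl | ⟨x, hx⟩
    · obtain ⟨B, hB, _⟩ := Dd_cover m (true :: v) (true :: v) (mem_Sub_self _ _)
      exact ⟨insert v B, by simp only [Ee]; simp; exact Or.inl ⟨B, hB, rfl⟩, by simp⟩
    · cases x
      · rcases Nat.eq_zero_or_pos m with rfl | hm
        · rw [SubT_zero hx]
          exact ⟨{r, false :: r}, by simp [Ee], by simp⟩
        · obtain ⟨B, hB, hvB⟩ := Ee_cover m (false :: r) hm v hx
          exact ⟨B, by simp only [Ee]; simp [hB], hvB⟩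
      · obtain ⟨B, hB, hvB⟩ := Dd_cover m (true :: r) v hx
        exact ⟨insert r B, by simp only [Ee]; simp; exact Or.inl ⟨B, hB, rfl⟩, by simp [hvB]⟩
  termination_by m r => 2 * m
end

mutual
theorem Dd_edge : ∀ (h : ℕ) (r : List Bool), ∀ (x : Bool) (v : List Bool),
    v ∈ SubT h r → x :: v ∈ SubT h r → ∃ B ∈ Dd h r, v ∈ B ∧ x :: v ∈ B
  | 0, r => by
    intro x v hv hxv
    have h1 := SubT_zero hv; have h2 := SubT_zero hxv
    subst h1; exact absurd h2 (by simp)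
  | 1, r => by
    intro x v hv hxv
    rcases edge_descend hv hxv with rfl | ⟨y, h1, h2⟩
    · cases x
      · exact ⟨{false :: v, v}, by simp [Dd], by simp, by simp⟩
      · exact ⟨{v, true :: v}, by simp [Dd], by simp, by simp⟩
    · have e1 := SubT_zero h1; have e2 := SubT_zero h2
      rw [e1] at e2; exact absurd e2 (by simp)
  | (h+2), r => by
    intro x v hv hxv
    rcases edge_descend hv hxv with rfl | ⟨y, h1, h2⟩
    · cases x
      · exact ⟨{false :: v, v}, by simp [Dd], by simp, by simp⟩
      · exact ⟨{v, true :: v}, by simp [Dd], by simp, by simp⟩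
    · cases y
      · obtain ⟨B, hB, hm⟩ := Ee_edge (h+1) (false :: r) (by omega) x v h1 h2
        exact ⟨B, by simp only [Dd]; simp [hB], hm⟩
      · obtain ⟨B, hB, hm⟩ := Ee_edge (h+1) (true :: r) (by omega) x v h1 h2
        exact ⟨B, by simp only [Dd]; simp [hB], hm⟩
  termination_by h r => 2 * h + 1

theorem Ee_edge : ∀ (m : ℕ) (r : List Bool), 1 ≤ m → ∀ (x : Bool) (v : List Bool),
    v ∈ SubT m r → x :: v ∈ SubT m r → ∃ B ∈ Ee m r, v ∈ B ∧ x :: v ∈ B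
  | 0, r => by omega
  | (m+1), r => by
    intro _ x v hv hxv
    rcases edge_descend hv hxv with rfl | ⟨y, h1, h2⟩
    · cases x
      · exact ⟨{v, false :: v}, by simp only [Ee]; simp, by simp, by simp⟩
      · obtain ⟨B, hB, hm⟩ := Dd_cover m (true :: v) (true :: v) (mem_Sub_self _ _)
        exact ⟨insert v B, by simp only [Ee]; simp; exact Or.inl ⟨B, hB, rfl⟩,
          by simp, by simp [hm]⟩
    · cases y
      · rcases Nat.eq_zero_or_pos m with rfl | hm
        · have e1 := SubT_zero h1; have e2 := SubT_zero h2
          rw [e1] at e2; exact absurd e2 (by simp)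
        · obtain ⟨B, hB, hmm⟩ := Ee_edge m (false :: r) hm x v h1 h2
          exact ⟨B, by simp only [Ee]; simp [hB], hmm⟩
      · obtain ⟨B, hB, hmm⟩ := Dd_edge m (true :: r) x v h1 h2
        exact ⟨insert r B, by simp only [Ee]; simp; exact Or.inl ⟨B, hB, rfl⟩,
          by simp [hmm.1], by simp [hmm.2]⟩
  termination_by m r => 2 * m
end

mutual
theorem Dd_card : ∀ (h : ℕ) (r : List Bool), ∀ B ∈ Dd h r, B.card ≤ (h+1)/2 + 1
  | 0, r => by
    intro B hB; simp [Dd] at hB; subst hB; simp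
  | 1, r => by
    intro B hB; simp [Dd] at hB
    rcases hB with rfl | rfl <;>
      exact le_trans (Finset.card_insert_le _ _) (by simp)
  | (h+2), r => by
    intro B hB
    simp only [Dd] at hB
    rw [List.mem_append] at hB
    rcases hB with hB | hB
    · rw [List.mem_reverse] at hB
      have := Ee_card (h+1) (false :: r) B hB; omega
    · rw [List.mem_append] at hB
      rcases hB with hB | hB
      · simp at hB
        rcases hB with rfl | rfl <;>
          exact le_trans (Finset.card_insert_le _ _) (by simp; omega)
      · have := Ee_card (h+1) (true :: r) B hB; omega
  termination_by h r => 2 * h + 1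

theorem Ee_card : ∀ (m : ℕ) (r : List Bool), ∀ B ∈ Ee m r, B.card ≤ m/2 + 2
  | 0, r => by intro B hB; simp [Ee] at hB
  | (m+1), r => by
    intro B hB
    simp only [Ee] at hB
    rw [List.mem_append] at hB
    rcases hB with hB | hB
    · rw [List.mem_map] at hB
      obtain ⟨B', hB', rfl⟩ := hB
      have := Dd_card m (true :: r) B' hB'
      have := Finset.card_insert_le r B'
      omega
    · rw [List.mem_append] at hB
      rcases hB with hB | hB
      · simp at hB; subst hB
        exact le_trans (Finset.card_insert_le _ _) (by simp)
      · have := Ee_card m (false :: r) B hB; omega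
  termination_by m r => 2 * m
end

/-! ### Contiguity machinery -/

def Contig (L : List (Finset (List Bool))) (v : List Bool) : Prop :=
  ∀ i j k : ℕ, i ≤ j → j ≤ k → v ∈ L.getD i ∅ → v ∈ L.getD k ∅ → v ∈ L.getD j ∅

def MemL (L : List (Finset (List Bool))) (v : List Bool) : Prop := ∃ B ∈ L, v ∈ B

lemma lt_of_mem_getD {L : List (Finset (List Bool))} {v : List Bool} {i : ℕ}
    (h : v ∈ L.getD i ∅) : i < L.length := by
  by_contra hc
  rw [List.getD_eq_default _ _ (by omega)] at h
  simp at h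

lemma memL_of_getD {L : List (Finset (List Bool))} {v : List Bool} {i : ℕ}
    (h : v ∈ L.getD i ∅) : MemL L v := by
  have hi := lt_of_mem_getD h
  rw [List.getD_eq_getElem _ _ hi] at h
  exact ⟨_, List.getElem_mem hi, h⟩

lemma memL_subset {L : List (Finset (List Bool))} {v : List Bool} {S : Set (List Bool)}
    (hsub : ∀ B ∈ L, ∀ w ∈ B, w ∈ S) (h : MemL L v) : v ∈ S := by
  obtain ⟨B, hB, hv⟩ := h; exact hsub B hB v hv

lemma contig_single (B : Finset (List Bool)) (v : List Bool) : Contig [B] v := by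
  intro i j k hij hjk hi hk
  have h1 := lt_of_mem_getD hi; have h2 := lt_of_mem_getD hk
  simp only [List.length_singleton] at h1 h2
  obtain rfl : j = 0 := by omega
  obtain rfl : i = 0 := by omega
  exact hi

lemma contig_append {L1 L2 : List (Finset (List Bool))} {v : List Bool}
    (h1 : Contig L1 v) (h2 : Contig L2 v)
    (hglue : MemL L1 v → MemL L2 v →
      v ∈ L1.getD (L1.length - 1) ∅ ∧ v ∈ L2.getD 0 ∅) :
    Contig (L1 ++ L2) v := by
  intro i j k hij hjk hi hk
  set n1 := L1.length with hn1
  by_cases hj : j < n1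
  · have hi' : v ∈ L1.getD i ∅ := by
      rwa [List.getD_append _ _ _ _ (by omega)] at hi
    rw [List.getD_append _ _ _ _ hj]
    by_cases hk' : k < n1
    · exact h1 i j k hij hjk hi' (by rwa [List.getD_append _ _ _ _ hk'] at hk)
    · have hk2 : v ∈ L2.getD (k - n1) ∅ := by
        rwa [List.getD_append_right _ _ _ _ (by omega)] at hk
      obtain ⟨hlast, _⟩ := hglue (memL_of_getD hi') (memL_of_getD hk2)
      have hL1 : 0 < n1 := by have := lt_of_mem_getD hi'; omega
      exact h1 i j (n1 - 1) hij (by omega) hi' hlast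
  · have hk2 : v ∈ L2.getD (k - n1) ∅ := by
      rwa [List.getD_append_right _ _ _ _ (by omega)] at hk
    rw [List.getD_append_right _ _ _ _ (by omega)]
    by_cases hi' : i < n1
    · have hi1 : v ∈ L1.getD i ∅ := by
        rwa [List.getD_append _ _ _ _ hi'] at hi
      obtain ⟨_, hfirst⟩ := hglue (memL_of_getD hi1) (memL_of_getD hk2)
      exact h2 0 (j - n1) (k - n1) (by omega) (by omega) hfirst hk2
    · have hi2 : v ∈ L2.getD (i - n1) ∅ := by
        rwa [List.getD_append_right _ _ _ _ (by omega)] at hi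
      exact h2 (i - n1) (j - n1) (k - n1) (by omega) (by omega) hi2 hk2

lemma getD_map_insert {L : List (Finset (List Bool))} {r : List Bool} {i : ℕ}
    (hi : i < L.length) :
    (L.map (insert r)).getD i ∅ = insert r (L.getD i ∅) := by
  rw [List.getD_eq_getElem _ _ (by simpa using hi), List.getD_eq_getElem _ _ hi,
    List.getElem_map]

lemma contig_map_insert {L : List (Finset (List Bool))} {r v : List Bool}
    (h : Contig L v) : Contig (L.map (insert r)) v := by
  intro i j k hij hjk hi hk
  have hk' : k < L.length := by simpa using lt_of_mem_getD hk
  have hj' : j < L.length := by omega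
  have hi' : i < L.length := by omega
  rw [getD_map_insert hi'] at hi
  rw [getD_map_insert hk'] at hk
  rw [getD_map_insert hj']
  by_cases hv : v = r
  · subst hv; exact Finset.mem_insert_self _ _
  · rcases Finset.mem_insert.mp hi with rfl | hi; · exact absurd rfl hv
    rcases Finset.mem_insert.mp hk with rfl | hk; · exact absurd rfl hv
    exact Finset.mem_insert_of_mem (h i j k hij hjk hi hk)

lemma getD_reverse' {L : List (Finset (List Bool))} {i : ℕ} (hi : i < L.length) :
    L.reverse.getD i ∅ = L.getD (L.length - 1 - i) ∅ := by
  rw [List.getD_eq_getElem _ _ (by simpa using hi),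
    List.getD_eq_getElem _ _ (by omega), List.getElem_reverse]

lemma contig_reverse {L : List (Finset (List Bool))} {v : List Bool}
    (h : Contig L v) : Contig L.reverse v := by
  intro i j k hij hjk hi hk
  have hk' : k < L.length := by simpa using lt_of_mem_getD hk
  have hj' : j < L.length := by omega
  have hi' : i < L.length := by omega
  rw [getD_reverse' hi'] at hi
  rw [getD_reverse' hk'] at hk
  rw [getD_reverse' hj']
  exact h (L.length - 1 - k) (L.length - 1 - j) (L.length - 1 - i)
    (by omega) (by omega) hk hi

lemma memL_reverse {L : List (Finset (List Bool))} {v : List Bool} :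
    MemL L.reverse v ↔ MemL L v := by
  unfold MemL; simp

lemma memL_append {L1 L2 : List (Finset (List Bool))} {v : List Bool} :
    MemL (L1 ++ L2) v ↔ MemL L1 v ∨ MemL L2 v := by
  unfold MemL; simp [List.mem_append, or_and_right, exists_or]

lemma not_memL_Ee_zero (r v : List Bool) : ¬ MemL (Ee 0 r) v := by
  rintro ⟨B, hB, -⟩; simp [Ee] at hB

lemma memL_singleton {B : Finset (List Bool)} {v : List Bool} :
    MemL [B] v ↔ v ∈ B := by unfold MemL; simp

lemma length_pos_of_memL {L : List (Finset (List Bool))} {v : List Bool}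
    (h : MemL L v) : 0 < L.length := by
  obtain ⟨B, hB, -⟩ := h
  exact List.length_pos_iff.mpr (List.ne_nil_of_mem hB)

lemma not_mem_SubT_of_cons_ne {m : ℕ} {r v : List Bool} {x y : Bool} (hxy : x ≠ y)
    (h : v ∈ SubT m (x :: r)) : v ∉ SubT m (y :: r) := by
  intro h2
  cases x <;> cases y <;> first
    | exact absurd rfl hxy
    | exact Sub_cons_disjoint h h2
    | exact Sub_cons_disjoint h2 h

theorem Ee_head : ∀ (m : ℕ) (r : List Bool), 1 ≤ m → r ∈ (Ee m r).getD 0 ∅ := by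
  intro m r hm
  rcases m with _ | m; · omega
  simp only [Ee]
  show r ∈ (((Dd m (true :: r)).map (insert r))
    ++ ([{r, false :: r}] ++ Ee m (false :: r))).getD 0 ∅
  have hlen : 0 < (Dd m (true :: r)).length :=
    List.length_pos_iff.mpr (Dd_ne_nil m (true :: r))
  rw [List.getD_append _ _ _ _ (by simpa using hlen), getD_map_insert hlen]
  exact Finset.mem_insert_self _ _

mutual
theorem Dd_contig : ∀ (h : ℕ) (r v : List Bool), Contig (Dd h r) v
  | 0, r, v => by
    simp only [Dd]
    exact contig_single _ _
  | 1, r, v => by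
    simp only [Dd]
    show Contig ([{false :: r, r}] ++ [{r, true :: r}]) v
    refine contig_append (contig_single _ _) (contig_single _ _) ?_
    intro h1 h2
    rw [memL_singleton] at h1 h2
    have hv : v = r := by
      rcases Finset.mem_insert.mp h1 with rfl | h1'
      · rcases Finset.mem_insert.mp h2 with h2' | h2'
        · exact h2'
        · simp at h2'
      · simpa using h1'
    subst hv
    constructor <;> simp
  | (h+2), r, v => by
    have hEa := Ee_contig (h+1) (false :: r) v
    have hEb := Ee_contig (h+1) (true :: r) v
    simp only [Dd]
    show Contig ((Ee (h+1) (false :: r)).reverse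
      ++ ([{false :: r, r}] ++ ([{r, true :: r}] ++ Ee (h+1) (true :: r)))) v
    have g3 : Contig ([{r, true :: r}] ++ Ee (h+1) (true :: r)) v := by
      refine contig_append (contig_single _ _) hEb ?_
      intro h1 h2
      rw [memL_singleton] at h1
      have hvS : v ∈ SubT (h+1) (true :: r) := memL_subset (Ee_subset _ _) h2
      have hv : v = true :: r := by
        rcases Finset.mem_insert.mp h1 with rfl | h1'
        · exact absurd hvS (not_mem_Sub_cons _ _ _)
        · simpa using h1'
      subst hv
      exact ⟨by simp, Ee_head (h+1) _ (by omega)⟩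
    have g2 : Contig ([{false :: r, r}] ++ ([{r, true :: r}] ++ Ee (h+1) (true :: r))) v := by
      refine contig_append (contig_single _ _) g3 ?_
      intro h1 h2
      rw [memL_singleton] at h1
      rw [memL_append, memL_singleton] at h2
      have hv : v = r := by
        rcases Finset.mem_insert.mp h1 with rfl | h1'
        · exfalso
          rcases h2 with h2 | h2
          · rcases Finset.mem_insert.mp h2 with h2' | h2'
            · exact absurd h2' (List.cons_ne_self _ _)
            · simp at h2'
          · exact Sub_cons_disjoint
              (mem_Sub_self (h+1) (false :: r))
              (memL_subset (Ee_subset _ _) h2)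
        · simpa using h1'
      subst hv
      refine ⟨by simp, ?_⟩
      rw [List.getD_append _ _ _ _ (by simp)]
      simp
    refine contig_append (contig_reverse hEa) g2 ?_
    intro h1 h2
    rw [memL_reverse] at h1
    have hvS : v ∈ SubT (h+1) (false :: r) := memL_subset (Ee_subset _ _) h1
    rw [memL_append, memL_singleton, memL_append, memL_singleton] at h2
    have hv : v = false :: r := by
      rcases h2 with h2 | h2 | h2
      · rcases Finset.mem_insert.mp h2 with rfl | h2'
        · rfl
        · exact absurd hvS ((by simpa using h2') ▸ not_mem_Sub_cons _ _ _)
      · exfalso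
        rcases Finset.mem_insert.mp h2 with rfl | h2'
        · exact absurd hvS (not_mem_Sub_cons _ _ _)
        · simp at h2'; subst h2'
          exact Sub_cons_disjoint hvS (mem_Sub_self (h+1) (true :: r))
      · exact absurd hvS (fun hvS => Sub_cons_disjoint hvS (memL_subset (Ee_subset _ _) h2))
    subst hv
    have hlen : 0 < (Ee (h+1) (false :: r)).length := by
      simpa using length_pos_of_memL h1
    constructor
    · rw [List.length_reverse, getD_reverse' (by simp; omega)]
      have : (Ee (h+1) (false :: r)).length - 1 -
          ((Ee (h+1) (false :: r)).length - 1) = 0 := by omega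
      rw [this]
      exact Ee_head (h+1) _ (by omega)
    · rw [List.getD_append _ _ _ _ (by simp)]
      simp
  termination_by h r => 2 * h + 1

theorem Ee_contig : ∀ (m : ℕ) (r v : List Bool), Contig (Ee m r) v
  | 0, r, v => by
    intro i j k _ _ hi _
    exact absurd (lt_of_mem_getD hi) (by simp [Ee])
  | (m+1), r, v => by
    simp only [Ee]
    show Contig (((Dd m (true :: r)).map (insert r))
      ++ ([{r, false :: r}] ++ Ee m (false :: r))) v
    have g3 : Contig ([{r, false :: r}] ++ Ee m (false :: r)) v := by
      refine contig_append (contig_single _ _) (Ee_contig m (false :: r) v) ?_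
      intro h1 h2
      rw [memL_singleton] at h1
      have hvS : v ∈ SubT m (false :: r) := memL_subset (Ee_subset _ _) h2
      have hm : 1 ≤ m := by
        rcases Nat.eq_zero_or_pos m with rfl | hm
        · exact absurd h2 (not_memL_Ee_zero _ _)
        · exact hm
      have hv : v = false :: r := by
        rcases Finset.mem_insert.mp h1 with rfl | h1'
        · exact absurd hvS (not_mem_Sub_cons _ _ _)
        · simpa using h1'
      subst hv
      exact ⟨by simp, Ee_head m _ hm⟩
    refine contig_append (contig_map_insert (Dd_contig m (true :: r) v)) g3 ?_
    intro h1 h2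
    rw [memL_append, memL_singleton] at h2
    have hv : v = r := by
      obtain ⟨B, hB, hvB⟩ := h1
      rw [List.mem_map] at hB
      obtain ⟨B', hB', rfl⟩ := hB
      rcases Finset.mem_insert.mp hvB with rfl | hvB'
      · rfl
      · exfalso
        have hvS : v ∈ SubT m (true :: r) := Dd_subset _ _ _ hB' _ hvB'
        rcases h2 with h2 | h2
        · rcases Finset.mem_insert.mp h2 with rfl | h2'
          · exact absurd hvS (not_mem_Sub_cons _ _ _)
          · simp at h2'; subst h2'
            exact Sub_cons_disjoint (mem_Sub_self m (false :: r)) hvS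
        · exact Sub_cons_disjoint (memL_subset (Ee_subset _ _) h2) hvS
    subst hv
    have hlen : 0 < (Dd m (true :: v)).length :=
      List.length_pos_iff.mpr (Dd_ne_nil _ _)
    constructor
    · rw [List.length_map, getD_map_insert (by omega)]
      exact Finset.mem_insert_self _ _
    · rw [List.getD_append _ _ _ _ (by simp)]
      simp
  termination_by m r => 2 * m
end

/-! ### path graph infrastructure -/

open SimpleGraph

lemma walk_ivt {n : ℕ} {t : Fin n} : ∀ {u w : Fin n} (p : (pathGraph n).Walk u w),
    u ≤ t → t ≤ w → t ∈ p.support := by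
  intro u w p
  induction p with
  | nil =>
    intro h1 h2
    simp [_root_.le_antisymm h2 h1]
  | @cons a b c hadj p ih =>
    intro h1 h2
    rcases eq_or_lt_of_le h1 with rfl | hlt
    · simp
    · rw [SimpleGraph.pathGraph_adj] at hadj
      have hb : b ≤ t := by
        rw [Fin.le_def]; rw [Fin.lt_def] at hlt
        rcases hadj with h | h <;> omega
      simp [ih hb h2]

lemma pathGraph_walk_edge {n : ℕ} {u v : Fin n} (huv : u.val + 1 = v.val) :
    ∀ {a c : Fin n} (p : (pathGraph n).Walk a c),
    a ≤ u → v ≤ c → s(u, v) ∈ p.edges := by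
  intro a c p
  induction p with
  | nil =>
    intro h1 h2
    exfalso
    rw [Fin.le_def] at h1 h2
    omega
  | @cons a b c hadj p ih =>
    intro h1 h2
    rw [SimpleGraph.pathGraph_adj] at hadj
    rw [SimpleGraph.Walk.edges_cons, List.mem_cons]
    by_cases hb : b ≤ u
    · exact Or.inr (ih hb h2)
    · left
      rw [Fin.le_def, not_le] at hb
      rw [Fin.le_def] at h1
      have ha : a = u := by
        apply Fin.ext
        rcases hadj with h | h <;> omega
      have hbv : b = v := by
        apply Fin.ext
        rcases hadj with h | h <;> omega
      rw [ha, hbv]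

lemma pathGraph_isAcyclic (n : ℕ) : (pathGraph n).IsAcyclic := by
  rw [SimpleGraph.isAcyclic_iff_forall_adj_isBridge]
  intro u v hadj
  rw [SimpleGraph.isBridge_iff]
  rw [SimpleGraph.reachable_delete_edges_iff_exists_walk]
  rintro ⟨p, hp⟩
  have hadj' := hadj
  rw [SimpleGraph.pathGraph_adj] at hadj'
  rcases hadj' with h | h
  · exact hp (pathGraph_walk_edge h p le_rfl le_rfl)
  · have := pathGraph_walk_edge h p.reverse le_rfl le_rfl
    rw [SimpleGraph.Walk.edges_reverse, List.mem_reverse, Sym2.eq_swap] at this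
    exact hp this

lemma pathGraph_isTree (n : ℕ) (hn : 0 < n) : (pathGraph n).IsTree := by
  obtain ⟨m, rfl⟩ := Nat.exists_eq_add_of_lt hn
  exact ⟨SimpleGraph.pathGraph_connected _, pathGraph_isAcyclic _⟩

lemma interval_induce_connected {n : ℕ} (s : Set (Fin n)) (hne : s.Nonempty)
    (hint : ∀ i j k : Fin n, i ≤ j → j ≤ k → i ∈ s → k ∈ s → j ∈ s) :
    ((pathGraph n).induce s).Connected := by
  have : Nonempty ↥s := hne.to_subtype
  refine ⟨fun a b => ?_⟩
  have key : ∀ d : ℕ, ∀ a b : ↥s, (a : Fin n) ≤ (b : Fin n) →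
      (b : Fin n).val - (a : Fin n).val = d →
      ((pathGraph n).induce s).Reachable a b := by
    intro d
    induction d with
    | zero =>
      intro a b hab hd
      have : (a : Fin n) = (b : Fin n) := by
        rw [Fin.le_def] at hab; apply Fin.ext; omega
      rw [Subtype.ext this]
    | succ d ih =>
      intro a b hab hd
      have hlt : (a : Fin n).val < (b : Fin n).val := by omega
      have hn' : (a : Fin n).val + 1 < n := lt_of_le_of_lt hlt (b : Fin n).isLt
      set a' : Fin n := ⟨(a : Fin n).val + 1, hn'⟩ with ha'
      have ha's : a' ∈ s := hint (a : Fin n) a' (b : Fin n)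
        (by show (a : Fin n).val ≤ (a : Fin n).val + 1; omega) (by rw [Fin.le_def]; simp [ha']; omega) a.2 b.2
      have hadj : ((pathGraph n).induce s).Adj a ⟨a', ha's⟩ := by
        simp only [SimpleGraph.comap_adj, Function.Embedding.coe_subtype]
        rw [SimpleGraph.pathGraph_adj]
        left; rfl
      exact hadj.reachable.trans
        (ih ⟨a', ha's⟩ b (by rw [Fin.le_def]; simp [ha']; omega) (by simp [ha']; omega))
  rcases le_total (a : Fin n) (b : Fin n) with hle | hle
  · exact key _ a b hle rfl
  · exact (key _ b a hle rfl).symm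

lemma mem_of_induce_connected {n : ℕ} {s : Set (Fin n)}
    (hc : ((pathGraph n).induce s).Connected)
    {i j k : Fin n} (hij : i ≤ j) (hjk : j ≤ k) (hi : i ∈ s) (hk : k ∈ s) : j ∈ s := by
  obtain ⟨p⟩ := hc.preconnected ⟨i, hi⟩ ⟨k, hk⟩
  let f : ((pathGraph n).induce s) →g (pathGraph n) :=
    ⟨Subtype.val, fun {a b} h => by simpa using h⟩
  have hj := walk_ivt (p.map f) hij hjk
  rw [SimpleGraph.Walk.support_map, List.mem_map] at hj
  obtain ⟨x, _, hx⟩ := hj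
  rw [← hx]
  exact x.2

/-! ### upper bound -/

lemma mem_SubT_top {h : ℕ} (v : {l : List Bool // l.length ≤ h}) :
    (v : List Bool) ∈ SubT h [] := ⟨List.nil_suffix, by simpa using v.2⟩

theorem upper_mem (h : ℕ) :
    ∃ (n : ℕ) (bag : Fin n → Finset {l : List Bool // l.length ≤ h}),
    IsTreeDecomp (completeBinaryTree h) (SimpleGraph.pathGraph n) bag ∧
    ∀ i, (bag i).card ≤ (h+1)/2 + 1 := by
  classical
  set L := Dd h [] with hL
  refine ⟨L.length, fun i => (L.getD i.val ∅).subtype (fun l => l.length ≤ h), ?_, ?_⟩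
  · refine ⟨pathGraph_isTree _ (List.length_pos_iff.mpr (Dd_ne_nil h [])), ?_, ?_, ?_⟩
    · intro v
      obtain ⟨B, hB, hv⟩ := Dd_cover h [] v.1 (mem_SubT_top v)
      obtain ⟨i, hi, hBi⟩ := List.mem_iff_getElem.mp hB
      refine ⟨⟨i, hi⟩, ?_⟩
      rw [Finset.mem_subtype]
      rwa [List.getD_eq_getElem _ _ hi, hBi]
    · intro u v huv
      rw [completeBinaryTree, SimpleGraph.fromRel_adj] at huv
      obtain ⟨hne, hrel⟩ := huv
      have key : ∀ (a b : {l : List Bool // l.length ≤ h}) (x : Bool),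
          (b : List Bool) = x :: (a : List Bool) →
          ∃ B ∈ L, (a : List Bool) ∈ B ∧ (b : List Bool) ∈ B := by
        intro a b x hx
        have := Dd_edge h [] x a.1 (mem_SubT_top a) (hx ▸ mem_SubT_top b)
        obtain ⟨B, hB, h1, h2⟩ := this
        exact ⟨B, hB, h1, hx ▸ h2⟩
      have main : ∃ B ∈ L, (u : List Bool) ∈ B ∧ (v : List Bool) ∈ B := by
        rcases hrel with ⟨x, hx⟩ | ⟨x, hx⟩
        · exact key u v x hx
        · obtain ⟨B, hB, h1, h2⟩ := key v u x hx
          exact ⟨B, hB, h2, h1⟩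
      obtain ⟨B, hB, h1, h2⟩ := main
      obtain ⟨i, hi, hBi⟩ := List.mem_iff_getElem.mp hB
      refine ⟨⟨i, hi⟩, ?_, ?_⟩ <;>
        (rw [Finset.mem_subtype, List.getD_eq_getElem _ _ hi, hBi]; assumption)
    · intro v
      refine interval_induce_connected _ ?_ ?_
      · obtain ⟨B, hB, hv⟩ := Dd_cover h [] v.1 (mem_SubT_top v)
        obtain ⟨i, hi, hBi⟩ := List.mem_iff_getElem.mp hB
        refine ⟨⟨i, hi⟩, ?_⟩
        simp only [Set.mem_setOf_eq, Finset.mem_subtype]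
        rwa [List.getD_eq_getElem _ _ hi, hBi]
      · intro i j k hij hjk hi hk
        simp only [Set.mem_setOf_eq, Finset.mem_subtype] at hi hk ⊢
        exact Dd_contig h [] v.1 i.val j.val k.val hij hjk hi hk
  · intro i
    have hi : i.val < L.length := i.isLt
    have hmem : L.getD i.val ∅ ∈ L := by
      rw [List.getD_eq_getElem _ _ hi]
      exact List.getElem_mem hi
    calc ((L.getD i.val ∅).subtype _).card = ((L.getD i.val ∅).filter _).card :=
          Finset.card_subtype _ _
      _ ≤ (L.getD i.val ∅).card := Finset.card_filter_le _ _
      _ ≤ (h+1)/2 + 1 := Dd_card h [] _ hmem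

/-! ### lower bound -/

lemma not_suffix_of_length_lt {s l : List Bool} (h : l.length < s.length) : ¬ s <:+ l :=
  fun hs => absurd hs.length_le (by omega)

lemma not_suffix_of_ne_same_length {s1 s2 l : List Bool} (h1 : s1 <:+ l)
    (hlen : s2.length = s1.length) (hne : s2 ≠ s1) : ¬ s2 <:+ l := by
  intro h2
  exact hne ((List.suffix_of_suffix_length_le h2 h1 (by omega)).eq_of_length
    hlen)

section Lower

variable {h : ℕ} {n : ℕ} {bag : Fin n → Finset {l : List Bool // l.length ≤ h}}

lemma cbt_adj_cons (a b : {l : List Bool // l.length ≤ h}) (x : Bool) (hx : (b : List Bool) = x :: (a : List Bool)) :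
    (completeBinaryTree h).Adj a b := by
  rw [completeBinaryTree, SimpleGraph.fromRel_adj]
  refine ⟨?_, Or.inl ⟨x, hx⟩⟩
  intro hab
  rw [hab] at hx
  exact List.cons_ne_self x _ hx.symm

lemma walk_suffix {r : List Bool} (hr : r.length ≤ h) :
    ∀ (s : List Bool) (hl : (s ++ r).length ≤ h),
    ∃ p : (completeBinaryTree h).Walk ⟨s ++ r, hl⟩ ⟨r, hr⟩,
      ∀ x ∈ p.support, r <:+ (x : List Bool) := by
  intro s
  induction s with
  | nil =>
    intro hl
    exact ⟨SimpleGraph.Walk.nil, by simp⟩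
  | cons a s ih =>
    intro hl
    have hl' : (s ++ r).length ≤ h := by simp at hl ⊢; omega
    obtain ⟨p, hp⟩ := ih hl'
    have hadj : (completeBinaryTree h).Adj ⟨a :: (s ++ r), hl⟩ ⟨s ++ r, hl'⟩ :=
      ((cbt_adj_cons ⟨s ++ r, hl'⟩ ⟨a :: (s ++ r), hl⟩ a rfl)).symm
    refine ⟨SimpleGraph.Walk.cons hadj p, ?_⟩
    intro x hx
    rw [SimpleGraph.Walk.support_cons, List.mem_cons] at hx
    rcases hx with rfl | hx
    · exact ⟨a :: s, by simp⟩
    · exact hp x hx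

lemma separator
    (hint : ∀ (v : {l : List Bool // l.length ≤ h}) (i j k : Fin n), i ≤ j → j ≤ k → v ∈ bag i → v ∈ bag k → v ∈ bag j)
    (hedge : ∀ u v : {l : List Bool // l.length ≤ h}, (completeBinaryTree h).Adj u v → ∃ i, u ∈ bag i ∧ v ∈ bag i) :
    ∀ {u w : {l : List Bool // l.length ≤ h}} (p : (completeBinaryTree h).Walk u w) {i k t : Fin n},
    i ≤ t → t ≤ k → u ∈ bag i → w ∈ bag k → ∃ x ∈ p.support, x ∈ bag t := by
  intro u w p
  induction p with
  | @nil a =>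
    intro i k t h1 h2 hu hw
    exact ⟨a, by simp, hint a i t k h1 h2 hu hw⟩
  | @cons a y c hadj p ih =>
    intro i k t h1 h2 hu hw
    obtain ⟨j, hja, hjy⟩ := hedge _ _ hadj
    by_cases hj : t ≤ j
    · exact ⟨a, by simp, hint a i t j h1 hj hu hja⟩
    · obtain ⟨x, hx1, hx2⟩ := ih (i := j) ((not_le.mp hj).le) h2 hjy hw
      exact ⟨x, by simp [hx1], hx2⟩

lemma middle_step
    (hint : ∀ (v : {l : List Bool // l.length ≤ h}) (i j k : Fin n), i ≤ j → j ≤ k → v ∈ bag i → v ∈ bag k → v ∈ bag j)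
    (hedge : ∀ u v : {l : List Bool // l.length ≤ h}, (completeBinaryTree h).Adj u v → ∃ i, u ∈ bag i ∧ v ∈ bag i)
    {ga gb gc r : List Bool} {K : ℕ} {ta tb tc : Fin n}
    (hbet : (ta ≤ tb ∧ tb ≤ tc) ∨ (tc ≤ tb ∧ tb ≤ ta))
    (ha : 1 ≤ ((bag ta).filter (fun v => ga <:+ v.1)).card)
    (hc : 1 ≤ ((bag tc).filter (fun v => gc <:+ v.1)).card)
    (hb : K ≤ ((bag tb).filter (fun v => gb <:+ v.1)).card)
    (hgb : ∀ v : {l : List Bool // l.length ≤ h}, gb <:+ (v : List Bool) → r <:+ (v : List Bool))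
    (hwalk : ∀ (u w : {l : List Bool // l.length ≤ h}), ga <:+ (u : List Bool) → gc <:+ (w : List Bool) →
      ∃ p : (completeBinaryTree h).Walk u w, ∀ x ∈ p.support,
        r <:+ (x : List Bool) ∧ ¬ gb <:+ (x : List Bool)) :
    ∃ i, K + 1 ≤ ((bag i).filter (fun v => r <:+ v.1)).card := by
  classical
  obtain ⟨u, hu⟩ := Finset.card_pos.mp
    (show 0 < ((bag ta).filter (fun v => ga <:+ v.1)).card by omega)
  obtain ⟨w, hw⟩ := Finset.card_pos.mp
    (show 0 < ((bag tc).filter (fun v => gc <:+ v.1)).card by omega)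
  rw [Finset.mem_filter] at hu hw
  obtain ⟨p, hp⟩ := hwalk u w hu.2 hw.2
  have hsep : ∃ x ∈ p.support, x ∈ bag tb := by
    rcases hbet with ⟨h1, h2⟩ | ⟨h1, h2⟩
    · exact separator hint hedge p h1 h2 hu.1 hw.1
    · obtain ⟨x, hx1, hx2⟩ := separator hint hedge p.reverse h1 h2 hw.1 hu.1
      rw [SimpleGraph.Walk.support_reverse, List.mem_reverse] at hx1
      exact ⟨x, hx1, hx2⟩
  obtain ⟨x, hxs, hxb⟩ := hsep
  obtain ⟨hxr, hxgb⟩ := hp x hxs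
  refine ⟨tb, ?_⟩
  have hnot : x ∉ (bag tb).filter (fun v => gb <:+ v.1) := by
    rw [Finset.mem_filter]; rintro ⟨-, h2⟩; exact hxgb h2
  have hsub : insert x ((bag tb).filter (fun v => gb <:+ v.1)) ⊆
      (bag tb).filter (fun v => r <:+ v.1) := by
    intro y hy
    rcases Finset.mem_insert.mp hy with rfl | hy
    · exact Finset.mem_filter.mpr ⟨hxb, hxr⟩
    · rw [Finset.mem_filter] at hy ⊢
      exact ⟨hy.1, hgb y hy.2⟩
  have h1 := Finset.card_insert_of_notMem hnot
  have h2 := Finset.card_le_card hsub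
  omega

lemma mem_support_append {h : ℕ} {u v w : {l : List Bool // l.length ≤ h}}
    {p : (completeBinaryTree h).Walk u v} {q : (completeBinaryTree h).Walk v w}
    {x : {l : List Bool // l.length ≤ h}} (hx : x ∈ (p.append q).support) :
    x ∈ p.support ∨ x ∈ q.support := by
  rw [SimpleGraph.Walk.support_append, List.mem_append] at hx
  rcases hx with hx | hx
  · exact Or.inl hx
  · exact Or.inr (List.mem_of_mem_tail hx)

/-- walk from the subtree of `xa :: false :: r` to the subtree of `false :: true :: r`,
avoiding the subtree of `yb :: zb :: r` provided it is a different grandchild. -/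
lemma hwalk_generic {xa : Bool} {yb zb : Bool} {r : List Bool} (hr2 : r.length + 2 ≤ h)
    (hne1 : (yb, zb) ≠ (xa, false)) (hne2 : (yb, zb) ≠ (false, true)) :
    ∀ (u w : {l : List Bool // l.length ≤ h}),
      (xa :: false :: r) <:+ u.1 → (false :: true :: r) <:+ w.1 →
      ∃ p : (completeBinaryTree h).Walk u w, ∀ x ∈ p.support,
        r <:+ x.1 ∧ ¬ (yb :: zb :: r) <:+ x.1 := by
  rintro ⟨u1, hu1⟩ ⟨w1, hw1⟩ h1 h3
  obtain ⟨s, hs⟩ := h1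
  obtain ⟨t, ht⟩ := h3
  simp only at hs ht
  subst hs; subst ht
  have hga : (xa :: false :: r).length ≤ h := by simp; omega
  have hgc : (false :: true :: r).length ≤ h := by simp; omega
  have hb' : (true :: r).length ≤ h := by simp; omega
  have ha' : (false :: r).length ≤ h := by simp; omega
  have hr : r.length ≤ h := by omega
  obtain ⟨p1, hp1⟩ := walk_suffix hga s hu1
  obtain ⟨p3, hp3⟩ := walk_suffix hgc t hw1
  have adj1 : (completeBinaryTree h).Adj ⟨xa :: false :: r, hga⟩ ⟨false :: r, ha'⟩ :=
    (cbt_adj_cons _ _ xa rfl).symm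
  have adj2 : (completeBinaryTree h).Adj ⟨false :: r, ha'⟩ ⟨r, hr⟩ :=
    (cbt_adj_cons _ _ false rfl).symm
  have adj3 : (completeBinaryTree h).Adj ⟨r, hr⟩ ⟨true :: r, hb'⟩ :=
    cbt_adj_cons _ _ true rfl
  have adj4 : (completeBinaryTree h).Adj ⟨true :: r, hb'⟩ ⟨false :: true :: r, hgc⟩ :=
    cbt_adj_cons _ _ false rfl
  refine ⟨p1.append ((SimpleGraph.Walk.cons adj1 (SimpleGraph.Walk.cons adj2
    (SimpleGraph.Walk.cons adj3 (SimpleGraph.Walk.cons adj4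
      SimpleGraph.Walk.nil)))).append p3.reverse), ?_⟩
  intro x hx
  have hlen_gb : (yb :: zb :: r).length = r.length + 2 := by simp
  rcases mem_support_append hx with hx | hx
  · have hsuf := hp1 x hx
    refine ⟨((List.suffix_cons _ _).trans (List.suffix_cons _ _)).trans hsuf, ?_⟩
    refine not_suffix_of_ne_same_length hsuf (by simp) ?_
    intro he
    injection he with e1 e2
    injection e2 with e2 _
    exact hne1 (by rw [e1, e2])
  rcases mem_support_append hx with hx | hx
  · simp only [SimpleGraph.Walk.support_cons, SimpleGraph.Walk.support_nil,
      List.mem_cons, List.not_mem_nil, or_false] at hx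
    rcases hx with rfl | rfl | rfl | rfl | rfl
    · refine ⟨(List.suffix_cons _ _).trans (List.suffix_cons _ _), ?_⟩
      refine not_suffix_of_ne_same_length (l := xa :: false :: r) suffix_rfl (by simp) ?_
      intro he
      injection he with e1 e2
      injection e2 with e2 _
      exact hne1 (by rw [e1, e2])
    · exact ⟨List.suffix_cons _ _, not_suffix_of_length_lt (by simp only [List.length_cons]; omega)⟩
    · exact ⟨suffix_rfl, not_suffix_of_length_lt (by simp only [List.length_cons]; omega)⟩
    · exact ⟨List.suffix_cons _ _, not_suffix_of_length_lt (by simp only [List.length_cons]; omega)⟩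
    · refine ⟨(List.suffix_cons _ _).trans (List.suffix_cons _ _), ?_⟩
      refine not_suffix_of_ne_same_length (l := false :: true :: r) suffix_rfl (by simp) ?_
      intro he
      injection he with e1 e2
      injection e2 with e2 _
      exact hne2 (by rw [e1, e2])
  · rw [SimpleGraph.Walk.support_reverse, List.mem_reverse] at hx
    have hsuf := hp3 x hx
    refine ⟨((List.suffix_cons _ _).trans (List.suffix_cons _ _)).trans hsuf, ?_⟩
    refine not_suffix_of_ne_same_length hsuf (by simp) ?_
    intro he
    injection he with e1 e2
    injection e2 with e2 _
    exact hne2 (by rw [e1, e2])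

/-- walk from subtree of `false :: false :: r` to subtree of `true :: false :: r`
avoiding subtree of `false :: true :: r`. -/
lemma hwalk12 {r : List Bool} (hr2 : r.length + 2 ≤ h) :
    ∀ (u w : {l : List Bool // l.length ≤ h}),
      (false :: false :: r) <:+ u.1 → (true :: false :: r) <:+ w.1 →
      ∃ p : (completeBinaryTree h).Walk u w, ∀ x ∈ p.support,
        r <:+ x.1 ∧ ¬ (false :: true :: r) <:+ x.1 := by
  rintro ⟨u1, hu1⟩ ⟨w1, hw1⟩ h1 h2
  obtain ⟨s, hs⟩ := h1
  obtain ⟨t, ht⟩ := h2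
  simp only at hs ht
  subst hs; subst ht
  have hga : (false :: false :: r).length ≤ h := by simp; omega
  have hgc : (true :: false :: r).length ≤ h := by simp; omega
  have ha' : (false :: r).length ≤ h := by simp; omega
  obtain ⟨p1, hp1⟩ := walk_suffix hga s hu1
  obtain ⟨p2, hp2⟩ := walk_suffix hgc t hw1
  have adj1 : (completeBinaryTree h).Adj ⟨false :: false :: r, hga⟩ ⟨false :: r, ha'⟩ :=
    (cbt_adj_cons _ _ false rfl).symm
  have adj2 : (completeBinaryTree h).Adj ⟨false :: r, ha'⟩ ⟨true :: false :: r, hgc⟩ :=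
    cbt_adj_cons _ _ true rfl
  refine ⟨p1.append ((SimpleGraph.Walk.cons adj1 (SimpleGraph.Walk.cons adj2
      SimpleGraph.Walk.nil)).append p2.reverse), ?_⟩
  intro x hx
  rcases mem_support_append hx with hx | hx
  · have hsuf := hp1 x hx
    refine ⟨((List.suffix_cons _ _).trans (List.suffix_cons _ _)).trans hsuf, ?_⟩
    exact not_suffix_of_ne_same_length hsuf (by simp) (by simp)
  rcases mem_support_append hx with hx | hx
  · simp only [SimpleGraph.Walk.support_cons, SimpleGraph.Walk.support_nil,
      List.mem_cons, List.not_mem_nil, or_false] at hx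
    rcases hx with rfl | rfl | rfl
    · exact ⟨(List.suffix_cons _ _).trans (List.suffix_cons _ _),
        not_suffix_of_ne_same_length (l := false :: false :: r) suffix_rfl (by simp) (by simp)⟩
    · exact ⟨List.suffix_cons _ _, not_suffix_of_length_lt (by simp only [List.length_cons]; omega)⟩
    · exact ⟨(List.suffix_cons _ _).trans (List.suffix_cons _ _),
        not_suffix_of_ne_same_length (l := true :: false :: r) suffix_rfl (by simp) (by simp)⟩
  · rw [SimpleGraph.Walk.support_reverse, List.mem_reverse] at hx
    have hsuf := hp2 x hx
    refine ⟨((List.suffix_cons _ _).trans (List.suffix_cons _ _)).trans hsuf, ?_⟩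
    exact not_suffix_of_ne_same_length hsuf (by simp) (by simp)

lemma between3 {α : Type*} [LinearOrder α] (a b c : α) :
    ((a ≤ b ∧ b ≤ c) ∨ (c ≤ b ∧ b ≤ a)) ∨
    ((b ≤ a ∧ a ≤ c) ∨ (c ≤ a ∧ a ≤ b)) ∨
    ((a ≤ c ∧ c ≤ b) ∨ (b ≤ c ∧ c ≤ a)) := by
  rcases le_total a b with h1 | h1 <;> rcases le_total b c with h2 | h2 <;>
    rcases le_total a c with h3 | h3 <;> tauto

theorem lower_aux
    (hcover : ∀ v : {l : List Bool // l.length ≤ h}, ∃ i, v ∈ bag i)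
    (hint : ∀ (v : {l : List Bool // l.length ≤ h}) (i j k : Fin n),
      i ≤ j → j ≤ k → v ∈ bag i → v ∈ bag k → v ∈ bag j)
    (hedge : ∀ u v : {l : List Bool // l.length ≤ h},
      (completeBinaryTree h).Adj u v → ∃ i, u ∈ bag i ∧ v ∈ bag i) :
    ∀ (m : ℕ) (r : List Bool), r.length + m = h →
      ∃ i : Fin n, (m+1)/2 + 1 ≤ ((bag i).filter (fun v => r <:+ v.1)).card := by
  intro m
  induction m using Nat.strong_induction_on with
  | _ m ih =>
  rcases m with _ | _ | m
  all_goals intro r hr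
  · obtain ⟨i, hi⟩ := hcover ⟨r, by omega⟩
    refine ⟨i, ?_⟩
    have : (⟨r, by omega⟩ : {l : List Bool // l.length ≤ h}) ∈
        (bag i).filter (fun v => r <:+ v.1) := Finset.mem_filter.mpr ⟨hi, suffix_rfl⟩
    have := Finset.card_pos.mpr ⟨_, this⟩
    omega
  · have hfr : (false :: r).length ≤ h := by simp; omega
    have hadj : (completeBinaryTree h).Adj ⟨r, by omega⟩ ⟨false :: r, hfr⟩ :=
      cbt_adj_cons _ _ false rfl
    obtain ⟨i, hi1, hi2⟩ := hedge _ _ hadj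
    refine ⟨i, ?_⟩
    have hm1 : (⟨r, by omega⟩ : {l : List Bool // l.length ≤ h}) ∈
        (bag i).filter (fun v => r <:+ v.1) := Finset.mem_filter.mpr ⟨hi1, suffix_rfl⟩
    have hm2 : (⟨false :: r, hfr⟩ : {l : List Bool // l.length ≤ h}) ∈
        (bag i).filter (fun v => r <:+ v.1) :=
      Finset.mem_filter.mpr ⟨hi2, List.suffix_cons _ _⟩
    have : 1 < ((bag i).filter (fun v => r <:+ v.1)).card :=
      Finset.one_lt_card.mpr ⟨_, hm1, _, hm2, by
        intro he
        have := congrArg Subtype.val he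
        simp only at this
        exact List.cons_ne_self false r this.symm⟩
    omega
  · -- inductive step
    have hr2 : r.length + 2 ≤ h := by omega
    set g1 := false :: false :: r with hg1
    set g2 := true :: false :: r with hg2
    set g3 := false :: true :: r with hg3
    obtain ⟨t1, h1⟩ := ih m (by omega) g1 (by simp [hg1]; omega)
    obtain ⟨t2, h2⟩ := ih m (by omega) g2 (by simp [hg2]; omega)
    obtain ⟨t3, h3⟩ := ih m (by omega) g3 (by simp [hg3]; omega)
    have hKpos : 1 ≤ (m+1)/2 + 1 := by omega
    have hsub1 : ∀ v : {l : List Bool // l.length ≤ h}, g1 <:+ v.1 → r <:+ v.1 :=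
      fun v hv => List.IsSuffix.trans ⟨[false, false], rfl⟩ hv
    have hsub2 : ∀ v : {l : List Bool // l.length ≤ h}, g2 <:+ v.1 → r <:+ v.1 :=
      fun v hv => List.IsSuffix.trans ⟨[true, false], rfl⟩ hv
    have hsub3 : ∀ v : {l : List Bool // l.length ≤ h}, g3 <:+ v.1 → r <:+ v.1 :=
      fun v hv => List.IsSuffix.trans ⟨[false, true], rfl⟩ hv
    have goal_of : (∃ i, (m+1)/2 + 1 + 1 ≤ ((bag i).filter (fun v => r <:+ v.1)).card) →
        ∃ i : Fin n, (m+2+1)/2 + 1 ≤ ((bag i).filter (fun v => r <:+ v.1)).card := by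
      rintro ⟨i, hi⟩; exact ⟨i, by omega⟩
    rcases between3 t1 t2 t3 with hbet | hbet | hbet
    · -- t2 is in the middle : ga = g1, gb = g2, gc = g3
      refine goal_of (middle_step hint hedge (ga := g1) (gb := g2) (gc := g3)
        (ta := t1) (tb := t2) (tc := t3) hbet (by omega) (by omega) h2 hsub2
        (hwalk_generic hr2 (by simp) (by simp)))
    · -- t1 in the middle : ga = g2, gb = g1, gc = g3
      refine goal_of (middle_step hint hedge (ga := g2) (gb := g1) (gc := g3)
        (ta := t2) (tb := t1) (tc := t3) hbet (by omega) (by omega) h1 hsub1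
        (hwalk_generic hr2 (by simp) (by simp)))
    · -- t3 in the middle : ga = g1, gb = g3, gc = g2
      refine goal_of (middle_step hint hedge (ga := g1) (gb := g3) (gc := g2)
        (ta := t1) (tb := t3) (tc := t2) hbet (by omega) (by omega) h3 hsub3
        (hwalk12 hr2))

end Lower

theorem pathwidth_completeBinaryTree' (h : ℕ) :
    pathwidth (completeBinaryTree h) = (h + 1) / 2 := by
  have hmem : (h+1)/2 ∈ {w : ℕ | ∃ (n : ℕ) (bag : Fin n → Finset {l : List Bool // l.length ≤ h}),
      IsTreeDecomp (completeBinaryTree h) (SimpleGraph.pathGraph n) bag ∧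
      ∀ i, (bag i).card ≤ w + 1} := by
    obtain ⟨n, bag, hdec, hcard⟩ := upper_mem h
    exact ⟨n, bag, hdec, hcard⟩
  refine le_antisymm (Nat.sInf_le hmem) ?_
  refine le_csInf ⟨_, hmem⟩ ?_
  rintro w ⟨n, bag, ⟨htree, hcover, hedge, hconn⟩, hcard⟩
  have hint : ∀ (v : {l : List Bool // l.length ≤ h}) (i j k : Fin n),
      i ≤ j → j ≤ k → v ∈ bag i → v ∈ bag k → v ∈ bag j :=
    fun v i j k hij hjk hi hk => mem_of_induce_connected (hconn v) hij hjk hi hk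
  obtain ⟨i, hi⟩ := lower_aux hcover hint hedge h [] (by simp)
  have h1 := Finset.card_filter_le (bag i) (fun v => [] <:+ v.1)
  have h2 := hcard i
  omega


/-- For every `h ≥ 1`, the complete binary tree of height `h` has pathwidth exactly
`⌈h / 2⌉ = (h + 1) / 2` (natural number division). -/
theorem pathwidth_completeBinaryTree (h : ℕ) (hh : 1 ≤ h) :
    pathwidth (completeBinaryTree h) = (h + 1) / 2 :=
  pathwidth_completeBinaryTree' h
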